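/- Suppose {A₁, …, Aₙ} is a finite family of pairwise disjoint finite subsets of ℝ/ℤ that is pairwise unlinked (each Aᵢ lies in the closure of one connected component of the complement of each Aⱼ, j ≠ i). Then there exists an embedding into the closed unit disk of the abstract graph whose vertex set is {∞} ∪ {v_θ : θ ∈ ⋃Aᵢ}/∼ (where v_θ ∼ v_{θ'} iff θ, θ' lie in the same Aᵢ) with an edge from ∞ to each class for each θ, such that the edges emanate from the center in the cyclic order given by the arguments θ on the circle, and no two edges cross. Equivalently: the chord diagram in the unit disk obtained by joining, for each Aᵢ, all points e^{2πiθ}, θ ∈ Aᵢ, to a common interior point can be drawn with the convex hulls of distinct Aᵢ pairwise disjoint. -/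

import Mathlib

open Real Set

abbrev Circle1 := AddCircle (1 : ℝ)

/-- The embedding θ ↦ e^{2πiθ} of ℝ/ℤ into ℂ. -/
noncomputable def circleEmb (θ : Circle1) : ℂ := (AddCircle.toCircle θ : ℂ)

/-- `UnlinkedIn A B` : B lies in the closure of a single connected component of
the complement of A in ℝ/ℤ. -/
def UnlinkedIn (A B : Set Circle1) : Prop :=
  ∃ x ∈ Aᶜ, B ⊆ closure (connectedComponentIn Aᶜ x)

/- ### Auxiliary lemmas -/

lemma circleEmb_coe' (t : ℝ) :
    circleEmb (t : Circle1) = Complex.exp (((2*π*t : ℝ) : ℂ) * Complex.I) := by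
  rw [circleEmb, AddCircle.toCircle_apply_mk, Circle.coe_exp]
  push_cast
  ring_nf

lemma circleEmb_re (t : ℝ) : (circleEmb (t : Circle1)).re = Real.cos (2*π*t) := by
  rw [circleEmb_coe', Complex.exp_ofReal_mul_I_re]

lemma circleEmb_im (t : ℝ) : (circleEmb (t : Circle1)).im = Real.sin (2*π*t) := by
  rw [circleEmb_coe', Complex.exp_ofReal_mul_I_im]

lemma coe1_eq_iff {s t : ℝ} : (s : Circle1) = (t : Circle1) ↔ ∃ n : ℤ, (n:ℝ) = s - t := by
  constructor
  · intro h
    have h2 : ((s - t : ℝ) : Circle1) = 0 := by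
      rw [AddCircle.coe_sub, h, sub_self]
    rw [AddCircle.coe_eq_zero_iff] at h2
    obtain ⟨n, hn⟩ := h2
    exact ⟨n, by simpa using hn⟩
  · rintro ⟨n, hn⟩
    have h2 : ((s - t : ℝ) : Circle1) = 0 := by
      rw [AddCircle.coe_eq_zero_iff]; exact ⟨n, by simp [← hn]⟩
    rw [AddCircle.coe_sub, sub_eq_zero] at h2; exact h2

lemma coe1_toIcoMod (a b : ℝ) : ((toIcoMod one_pos a b : ℝ) : Circle1) = (b : Circle1) := by
  rw [coe1_eq_iff]
  refine ⟨-(toIcoDiv one_pos a b), ?_⟩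
  rw [toIcoMod]
  push_cast [zsmul_eq_mul]
  ring

lemma trig_id (P Q : ℝ) :
    sin (2*Q) - sin (2*P) + sin (2*(P-Q)) = 4 * sin (P-Q) * sin P * sin Q := by
  rw [sin_two_mul, sin_two_mul, sin_two_mul, sin_sub, cos_sub]
  linear_combination (-(2 * sin Q * cos Q)) * sin_sq_add_cos_sq P +
    (2 * sin P * cos P) * sin_sq_add_cos_sq Q

lemma Fval (α β t : ℝ) :
    (sin (2*π*α) - sin (2*π*β)) * cos (2*π*t) + (cos (2*π*β) - cos (2*π*α)) * sin (2*π*t)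
      = -sin (2*π*(β-α)) + 4 * sin (π*(β-α)) * sin (π*(t-α)) * sin (π*(t-β)) := by
  have h := trig_id (π*(t-α)) (π*(t-β))
  have e1 : 2*(π*(t-β)) = 2*π*t - 2*π*β := by ring
  have e2 : 2*(π*(t-α)) = 2*π*t - 2*π*α := by ring
  have e3 : 2*(π*(t-α) - π*(t-β)) = 2*π*(β-α) := by ring
  have e4 : π*(t-α) - π*(t-β) = π*(β-α) := by ring
  rw [e1, e2, e3, e4, sin_sub, sin_sub] at h
  linear_combination h

/-- Separation of convex hulls by a linear functional. -/
lemma sep_lemma {S T : Set ℂ} (p q c : ℝ)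
    (hS : ∀ z ∈ S, c ≤ p * z.re + q * z.im)
    (hT : ∀ z ∈ T, p * z.re + q * z.im < c) :
    Disjoint (convexHull ℝ S) (convexHull ℝ T) := by
  have hlin : IsLinearMap ℝ (fun z : ℂ => p * z.re + q * z.im) := by
    constructor
    · intro a b; simp only [Complex.add_re, Complex.add_im]; ring
    · intro r z
      simp only [Complex.smul_re, Complex.smul_im, smul_eq_mul]
      ring
  have h1 : convexHull ℝ S ⊆ {z : ℂ | c ≤ p * z.re + q * z.im} :=
    convexHull_min hS (convex_halfSpace_ge hlin c)
  have h2 : convexHull ℝ T ⊆ {z : ℂ | p * z.re + q * z.im < c} :=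
    convexHull_min hT (convex_halfSpace_lt hlin c)
  rw [Set.disjoint_left]
  intro z hz1 hz2
  have k1 : c ≤ p * z.re + q * z.im := h1 hz1
  have k2 : p * z.re + q * z.im < c := h2 hz2
  linarith

lemma continuous_coe1 : Continuous (fun r : ℝ => (r : Circle1)) :=
  continuous_coinduced_rng

lemma isOpenMap_coe1 : IsOpenMap (fun r : ℝ => (r : Circle1)) :=
  QuotientAddGroup.isOpenMap_coe

/-- The key structural lemma: the closure of a connected component of the complement of a
finite set `S` (with at least two points) on the circle is contained in a closed arc whose
endpoints lie in `S` and whose interior misses `S`. -/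
lemma key (S : Finset Circle1) (hcard : 2 ≤ S.card) {x : Circle1}
    (hx : x ∈ (↑S : Set Circle1)ᶜ) :
    ∃ α β : ℝ, α < β ∧ β < α + 1 ∧ ((α : Circle1) ∈ S) ∧ ((β : Circle1) ∈ S) ∧
      closure (connectedComponentIn (↑S : Set Circle1)ᶜ x) ⊆
        (fun r : ℝ => (r : Circle1)) '' Set.Icc α β ∧
      ∀ t ∈ Set.Ioo α β, (t : Circle1) ∉ S := by
  obtain ⟨xt, rfl⟩ := QuotientAddGroup.mk_surjective x
  have hSne : S.Nonempty := Finset.card_pos.mp (by omega)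
  set ℓ : Circle1 → ℝ := fun s => (AddCircle.equivIco 1 (xt - 1) s : ℝ) with hℓdef
  have hℓcoe : ∀ s : Circle1, ((ℓ s : ℝ) : Circle1) = s := fun s =>
    (AddCircle.equivIco 1 (xt - 1)).symm_apply_apply s
  have hxt1 : ((xt - 1 : ℝ) : Circle1) = (xt : Circle1) :=
    coe1_eq_iff.mpr ⟨-1, by push_cast; ring⟩
  have hℓmem : ∀ s ∈ S, ℓ s ∈ Set.Ioo (xt - 1) xt := by
    intro s hs
    have h1 : ℓ s ∈ Set.Ico (xt - 1) (xt - 1 + 1) := (AddCircle.equivIco 1 (xt - 1) s).2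
    rw [sub_add_cancel] at h1
    refine ⟨lt_of_le_of_ne h1.1 fun he => ?_, h1.2⟩
    apply hx
    show ((xt : ℝ) : Circle1) ∈ (↑S : Set Circle1)
    rw [← hxt1, he, hℓcoe s]
    exact hs
  set Lfin := S.image ℓ with hLdef
  have hLne : Lfin.Nonempty := hSne.image ℓ
  set α := Lfin.max' hLne with hαdef
  set βm := Lfin.min' hLne with hβmdef
  set β := βm + 1 with hβdef
  obtain ⟨sα, hsα, hsαℓ⟩ := Finset.mem_image.mp (Lfin.max'_mem hLne)
  obtain ⟨sβ, hsβ, hsβℓ⟩ := Finset.mem_image.mp (Lfin.min'_mem hLne)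
  rw [← hαdef] at hsαℓ
  rw [← hβmdef] at hsβℓ
  have hαS : (α : Circle1) ∈ S := by rw [← hsαℓ, hℓcoe]; exact hsα
  have hβmS : (βm : Circle1) ∈ S := by rw [← hsβℓ, hℓcoe]; exact hsβ
  have hβS : (β : Circle1) ∈ S := by
    have : ((β : ℝ) : Circle1) = (βm : Circle1) := coe1_eq_iff.mpr ⟨1, by push_cast; ring⟩
    rw [this]; exact hβmS
  have hαmem : α ∈ Set.Ioo (xt - 1) xt := by rw [← hsαℓ]; exact hℓmem _ hsα
  have hβmmem : βm ∈ Set.Ioo (xt - 1) xt := by rw [← hsβℓ]; exact hℓmem _ hsβ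
  have hαβ : α < β := by
    have := hαmem.2; have := hβmmem.1; simp only [hβdef]; linarith
  have hβα1 : β < α + 1 := by
    obtain ⟨a, ha, b, hb, hab⟩ := Finset.one_lt_card.mp (by omega : 1 < S.card)
    have hℓab : ℓ a ≠ ℓ b := by
      intro h; apply hab; rw [← hℓcoe a, h, hℓcoe b]
    have h1 : βm ≤ ℓ a := Lfin.min'_le _ (Finset.mem_image_of_mem ℓ ha)
    have h2 : ℓ a ≤ α := Lfin.le_max' _ (Finset.mem_image_of_mem ℓ ha)
    have h3 : βm ≤ ℓ b := Lfin.min'_le _ (Finset.mem_image_of_mem ℓ hb)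
    have h4 : ℓ b ≤ α := Lfin.le_max' _ (Finset.mem_image_of_mem ℓ hb)
    have hne : βm ≠ α := by
      intro h
      apply hℓab
      have ha' : ℓ a = α := le_antisymm h2 (h ▸ h1)
      have hb' : ℓ b = α := le_antisymm h4 (h ▸ h3)
      rw [ha', hb']
    have : βm < α := lt_of_le_of_ne (h1.trans h2) hne
    simp only [hβdef]
    linarith
  have hSI : ∀ t ∈ Set.Ioo α β, (t : Circle1) ∉ S := by
    intro t ht hts
    have h1 : βm ≤ ℓ ((t : ℝ) : Circle1) := Lfin.min'_le _ (Finset.mem_image_of_mem ℓ hts)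
    have h2 : ℓ ((t : ℝ) : Circle1) ≤ α := Lfin.le_max' _ (Finset.mem_image_of_mem ℓ hts)
    obtain ⟨n, hn⟩ := coe1_eq_iff.mp (hℓcoe ((t : ℝ) : Circle1))
    have hn1 : (n : ℝ) < 0 := by rw [hn]; linarith [ht.1]
    have hn2 : (-1 : ℝ) < n := by
      rw [hn]
      have := ht.2
      simp only [hβdef] at this
      linarith
    have : (-1 : ℤ) < n := by exact_mod_cast hn2
    have : n < 0 := by exact_mod_cast hn1
    omega
  -- the two open arcs
  set I : Set Circle1 := (fun r : ℝ => (r : Circle1)) '' Set.Ioo α β with hIdef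
  set J : Set Circle1 := (fun r : ℝ => (r : Circle1)) '' Set.Ioo β (α + 1) with hJdef
  have hIopen : IsOpen I := isOpenMap_coe1 _ isOpen_Ioo
  have hJopen : IsOpen J := isOpenMap_coe1 _ isOpen_Ioo
  have hIJ : Disjoint I J := by
    rw [Set.disjoint_left]
    rintro θ ⟨t, ht, rfl⟩ ⟨t', ht', heq⟩
    obtain ⟨n, hn⟩ := coe1_eq_iff.mp heq
    have h1 : (0 : ℝ) < n := by rw [hn]; linarith [ht.2, ht'.1]
    have h2 : (n : ℝ) < 1 := by rw [hn]; linarith [ht.1, ht'.2]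
    have : (0 : ℤ) < n := by exact_mod_cast h1
    have : n < 1 := by exact_mod_cast h2
    omega
  have hcover : connectedComponentIn (↑S : Set Circle1)ᶜ (xt : Circle1) ⊆ I ∪ J := by
    intro θ hθ
    have hθc : θ ∈ (↑S : Set Circle1)ᶜ := connectedComponentIn_subset _ _ hθ
    obtain ⟨t0, rfl⟩ := QuotientAddGroup.mk_surjective θ
    set t := toIcoMod one_pos α t0 with htdef
    have htc : (t : Circle1) = (t0 : Circle1) := coe1_toIcoMod α t0
    have htm : t ∈ Set.Ico α (α + 1) := toIcoMod_mem_Ico one_pos α t0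
    rcases eq_or_lt_of_le htm.1 with he | hαt
    · exfalso; apply hθc; rw [← htc, ← he]; exact hαS
    rcases lt_trichotomy t β with h1 | h1 | h1
    · exact Or.inl ⟨t, ⟨hαt, h1⟩, htc⟩
    · exfalso; apply hθc; rw [← htc, h1]; exact hβS
    · exact Or.inr ⟨t, ⟨h1, htm.2⟩, htc⟩
  have hxI : ((xt : ℝ) : Circle1) ∈ I := ⟨xt, ⟨hαmem.2, by simp only [hβdef]; linarith [hβmmem.1]⟩, rfl⟩
  have hCI : connectedComponentIn (↑S : Set Circle1)ᶜ (xt : Circle1) ⊆ I := by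
    refine IsPreconnected.subset_left_of_subset_union hIopen hJopen hIJ hcover ?_
      (isPreconnected_connectedComponentIn)
    exact ⟨(xt : Circle1), mem_connectedComponentIn hx, hxI⟩
  have hclosed : IsClosed ((fun r : ℝ => (r : Circle1)) '' Set.Icc α β) :=
    (isCompact_Icc.image continuous_coe1).isClosed
  refine ⟨α, β, hαβ, hβα1, hαS, hβS, ?_, hSI⟩
  exact closure_minimal (hCI.trans (Set.image_mono Set.Ioo_subset_Icc_self)) hclosed

/-- A pairwise disjoint, pairwise unlinked family of finite subsets of the circle
can be realized by a non-crossing chord diagram: the convex hulls (in the closed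
unit disk) of the images e^{2πiθ} of the distinct sets are pairwise disjoint.
This is the planarity fact underlying the construction of embedded webs. -/
theorem unlinked_family_embeds (n : ℕ) (A : Fin n → Finset Circle1)
    (hdisj : Pairwise fun i j => Disjoint (A i) (A j))
    (hunl : Pairwise fun i j =>
      UnlinkedIn ((A i : Set Circle1)) ((A j : Set Circle1))) :
    Pairwise fun i j =>
      Disjoint (convexHull ℝ (circleEmb '' (A i : Set Circle1)))
               (convexHull ℝ (circleEmb '' (A j : Set Circle1))) := by
  intro i j hij
  rcases Nat.lt_or_ge (A i).card 2 with hc | hc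
  · rcases Nat.lt_or_ge (A i).card 1 with hc0 | hc1
    · -- `A i` is empty
      have : A i = ∅ := Finset.card_eq_zero.mp (by omega)
      simp [this]
    · -- `A i` is a singleton `{a}`
      have hc1' : (A i).card = 1 := by omega
      obtain ⟨a, ha⟩ := Finset.card_eq_one.mp hc1'
      obtain ⟨r, hr⟩ := QuotientAddGroup.mk_surjective a
      apply sep_lemma (Real.cos (2*π*r)) (Real.sin (2*π*r)) 1
      · rintro z ⟨θ, hθ, rfl⟩
        have hθa : θ = ((r : ℝ) : Circle1) := by
          rw [ha] at hθ
          simp only [Finset.coe_singleton, Set.mem_singleton_iff] at hθ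
          rw [hθ, ← hr]
        rw [hθa, circleEmb_re, circleEmb_im]
        nlinarith [sin_sq_add_cos_sq (2*π*r)]
      · rintro z ⟨θ, hθ, rfl⟩
        obtain ⟨t, rfl⟩ := QuotientAddGroup.mk_surjective θ
        rw [circleEmb_re, circleEmb_im]
        have hne : ((t : ℝ) : Circle1) ≠ ((r : ℝ) : Circle1) := by
          intro h
          have hmemi : ((t : ℝ) : Circle1) ∈ A i := by
            rw [h, hr, ha]; exact Finset.mem_singleton_self a
          exact (Finset.disjoint_left.mp (hdisj hij) hmemi) (Finset.mem_coe.mp hθ)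
        have hcs : Real.cos (2*π*r) * Real.cos (2*π*t) + Real.sin (2*π*r) * Real.sin (2*π*t)
            = Real.cos (2*π*r - 2*π*t) := (Real.cos_sub _ _).symm
        rw [hcs]
        rcases lt_or_eq_of_le (Real.cos_le_one (2*π*r - 2*π*t)) with h | h
        · exact h
        · exfalso
          obtain ⟨m, hm⟩ := (Real.cos_eq_one_iff _).mp h
          have hm' : (m : ℝ) * (2*π) = (r - t) * (2*π) := by linarith
          have hmrt : (m : ℝ) = r - t :=
            mul_right_cancel₀ (by positivity : (0:ℝ) < 2*π).ne' hm'
          exact hne (coe1_eq_iff.mpr ⟨-m, by push_cast; linarith⟩)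
  · -- `A i` has at least two points
    obtain ⟨x, hx, hsub⟩ := hunl hij
    obtain ⟨α, β, hαβ, hβα1, hαS, hβS, hcl, hSI⟩ := key (A i) hc hx
    have hD : 0 < Real.sin (π*(β-α)) := by
      apply Real.sin_pos_of_pos_of_lt_pi
      · have := Real.pi_pos; nlinarith
      · have := Real.pi_pos; nlinarith
    apply sep_lemma (Real.sin (2*π*α) - Real.sin (2*π*β))
      (Real.cos (2*π*β) - Real.cos (2*π*α)) (-Real.sin (2*π*(β-α)))
    · rintro z ⟨θ, hθ, rfl⟩
      obtain ⟨t0, rfl⟩ := QuotientAddGroup.mk_surjective θ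
      set t := toIcoMod one_pos α t0 with htdef
      have htc : ((t : ℝ) : Circle1) = ((t0 : ℝ) : Circle1) := coe1_toIcoMod α t0
      have htm : t ∈ Set.Ico α (α+1) := toIcoMod_mem_Ico one_pos α t0
      have him : circleEmb ((t0 : ℝ) : Circle1) = circleEmb ((t : ℝ) : Circle1) := by rw [htc]
      rw [him, circleEmb_re, circleEmb_im, Fval]
      rcases eq_or_lt_of_le htm.1 with he | hαt
      · rw [← he]
        simp
      · rcases lt_trichotomy t β with h1 | h1 | h1
        · exact absurd (by rw [htc]; exact Finset.mem_coe.mp hθ) (hSI t ⟨hαt, h1⟩)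
        · rw [h1]
          simp
        · have s1 : 0 ≤ Real.sin (π*(t-α)) := by
            apply Real.sin_nonneg_of_nonneg_of_le_pi
            · have := Real.pi_pos; nlinarith
            · have h2 := htm.2; have := Real.pi_pos; nlinarith
          have s2 : 0 ≤ Real.sin (π*(t-β)) := by
            apply Real.sin_nonneg_of_nonneg_of_le_pi
            · have := Real.pi_pos; nlinarith
            · have h2 := htm.2; have := Real.pi_pos; nlinarith
          nlinarith [mul_nonneg (mul_nonneg hD.le s1) s2]
    · rintro z ⟨θ, hθ, rfl⟩
      obtain ⟨t, htI, hteq⟩ := hcl (hsub hθ)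
      rw [← hteq]
      have hmemj : ((t : ℝ) : Circle1) ∈ A j := by
        have := Finset.mem_coe.mp hθ
        rw [← hteq] at this
        exact this
      have hnoti : ((t : ℝ) : Circle1) ∉ A i :=
        fun h => (Finset.disjoint_left.mp (hdisj hij) h) hmemj
      have ht1 : α < t := by
        rcases eq_or_lt_of_le htI.1 with he | h
        · exact absurd (he ▸ hαS) hnoti
        · exact h
      have ht2 : t < β := by
        rcases eq_or_lt_of_le htI.2 with he | h
        · exact absurd (he ▸ hβS) hnoti
        · exact h
      rw [circleEmb_re, circleEmb_im, Fval]
      have s1 : 0 < Real.sin (π*(t-α)) := by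
        apply Real.sin_pos_of_pos_of_lt_pi
        · have := Real.pi_pos; nlinarith
        · have := Real.pi_pos; nlinarith
      have s2 : Real.sin (π*(t-β)) < 0 := by
        have he : π*(t-β) = -(π*(β-t)) := by ring
        rw [he, Real.sin_neg, neg_lt, neg_zero]
        apply Real.sin_pos_of_pos_of_lt_pi
        · have := Real.pi_pos; nlinarith
        · have := Real.pi_pos; nlinarith
      nlinarith [mul_pos (mul_pos hD s1) (neg_pos.mpr s2)]
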